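/- The automorphism group of G₁₃ has order 24. -/

import Mathlib

open Finset

/-- Representatives of the 13 lines through the origin in ℝ³ spanned by
nonzero `{-1,0,1}`-vectors. -/
def g13vec : Fin 13 → Fin 3 → ℤ :=
  ![![1,0,0], ![0,1,0], ![0,0,1],
    ![1,1,0], ![1,-1,0], ![1,0,1], ![1,0,-1], ![0,1,1], ![0,1,-1],
    ![1,1,1], ![1,1,-1], ![1,-1,1], ![-1,1,1]]

/-- The orthogonality graph on the 13 lines. -/
def G13 : SimpleGraph (Fin 13) :=
  SimpleGraph.fromRel (fun u v => ∑ i, g13vec u i * g13vec v i = 0)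

def adjN : ℕ := 27040010604756267023263249181211668917144741781894

def adjB (u v : Fin 13) : Bool := (adjN >>> (u.val * 13 + v.val)) &&& 1 == 1

instance : DecidableRel G13.Adj := fun u v =>
  decidable_of_iff' _ (SimpleGraph.fromRel_adj _ u v)

lemma adj_iff : ∀ u v, G13.Adj u v ↔ adjB u v = true := by decide

def cands (m : List (Fin 13 × Fin 13)) (v : Fin 13) : List (Fin 13) :=
  (List.finRange 13).filter fun w => m.all fun pr => adjB w pr.2 == adjB v pr.1

def extAux : List (Fin 13) → List (Fin 13 × Fin 13) → Option (List (Fin 13 × Fin 13))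
  | [], m => some m
  | v :: vs, m =>
    match cands m v with
    | [w] => extAux vs (m ++ [(v, w)])
    | _ => none

def ord0 : List (Fin 13) := [0, 1, 9]
def ord1 : List (Fin 13) := [2, 3, 4, 5, 6, 7, 8, 10, 11, 12]

def extT (t : Fin 13 × Fin 13 × Fin 13) : Option (List (Fin 13 × Fin 13)) :=
  extAux ord1 [(0, t.1), (1, t.2.1), (9, t.2.2)]

def mFun (m : List (Fin 13 × Fin 13)) (v : Fin 13) : Fin 13 :=
  ((m.find? fun pr => pr.1 == v).map Prod.snd).getD 0

def isAuto (g : Fin 13 → Fin 13) : Bool :=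
  (List.finRange 13).all fun u => (List.finRange 13).all fun v => adjB (g u) (g v) == adjB u v

def goodTuple (t : Fin 13 × Fin 13 × Fin 13) : Bool :=
  match extT t with
  | some m => isAuto (mFun m)
  | none => false

def Resolves : List (Fin 13) → List (Fin 13) → Prop
  | _, [] => True
  | done, v :: vs =>
      (∀ w, (∀ u ∈ done, adjB w u = adjB v u) → w = v) ∧ Resolves (done ++ [v]) vs

instance instDecRes : ∀ d vs, Decidable (Resolves d vs)
  | _, [] => .isTrue trivial
  | d, v :: vs =>
    have : Decidable (Resolves (d ++ [v]) vs) := instDecRes _ _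
    inferInstanceAs (Decidable (_ ∧ _))

lemma resolves_chain : Resolves ord0 ord1 := by decide

lemma rows_inj : ∀ u v : Fin 13, (∀ s, adjB u s = adjB v s) → u = v := by decide

lemma filter_beq : ∀ c : Fin 13, (List.finRange 13).filter (fun w => w == c) = [c] := by
  decide

lemma isAuto_iff (g : Fin 13 → Fin 13) :
    isAuto g = true ↔ ∀ u v, adjB (g u) (g v) = adjB u v := by
  simp [isAuto, List.all_eq_true]

lemma extAux_spec (f : Fin 13 → Fin 13) (hS : Function.Surjective f)
    (hadj : ∀ u v, adjB (f u) (f v) = adjB u v) :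
    ∀ vs done, Resolves done vs →
      extAux vs (done.map fun u => (u, f u)) = some ((done ++ vs).map fun u => (u, f u))
  | [], done, _ => by simp [extAux]
  | v :: vs, done, h => by
    have hc : cands (done.map fun u => (u, f u)) v = [f v] := by
      have hpq : ∀ w ∈ List.finRange 13,
          ((done.map fun u => (u, f u)).all fun pr => adjB w pr.2 == adjB v pr.1)
            = (w == f v) := by
        intro w _
        have h1 : ((done.map fun u => (u, f u)).all
            fun pr => adjB w pr.2 == adjB v pr.1) = true ↔ w = f v := by
          constructor
          · intro hall
            obtain ⟨u0, rfl⟩ := hS w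
            refine congrArg f (h.1 u0 fun u hu => ?_)
            have h2 := List.all_eq_true.1 hall (u, f u) (List.mem_map_of_mem hu)
            have h3 : adjB (f u0) (f u) = adjB v u := by exact_mod_cast beq_iff_eq.1 h2
            rw [← hadj u0 u]; exact h3
          · rintro rfl
            refine List.all_eq_true.2 ?_
            intro pr hmem
            obtain ⟨u', hu', rfl⟩ := List.mem_map.1 hmem
            exact beq_iff_eq.2 (hadj v u')
        cases hb : ((done.map fun u => (u, f u)).all fun pr => adjB w pr.2 == adjB v pr.1) <;>
          cases hb2 : (w == f v) <;> simp_all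
      rw [cands, List.filter_congr hpq, filter_beq]
    rw [extAux, hc]
    have hmm : (done.map fun u => (u, f u)) ++ [(v, f v)]
        = (done ++ [v]).map fun u => (u, f u) := by simp
    show extAux vs ((done.map fun u => (u, f u)) ++ [(v, f v)]) = _
    rw [hmm, extAux_spec f hS hadj vs (done ++ [v]) h.2]
    simp

lemma ext_of_auto (f : Fin 13 → Fin 13) (hS : Function.Surjective f)
    (hadj : ∀ u v, adjB (f u) (f v) = adjB u v) :
    extT (f 0, f 1, f 9) = some ((ord0 ++ ord1).map fun u => (u, f u)) := by
  have := extAux_spec f hS hadj ord1 ord0 resolves_chain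
  simpa [extT, ord0] using this

lemma mFun_map (f : Fin 13 → Fin 13) :
    mFun ((ord0 ++ ord1).map fun u => (u, f u)) = f := by
  funext v
  fin_cases v <;> rfl

lemma extAux_prefix : ∀ vs m m', extAux vs m = some m' → ∃ r, m' = m ++ r
  | [], m, m', h => ⟨[], by cases h; simp⟩
  | v :: vs, m, m', h => by
    unfold extAux at h
    split at h
    · next w heq =>
      obtain ⟨r, hr⟩ := extAux_prefix vs _ _ h
      exact ⟨(v, w) :: r, by simp [hr]⟩
    · exact absurd h (by simp)

set_option maxRecDepth 100000 in
set_option maxHeartbeats 2000000 in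
lemma card24 : Fintype.card {t : Fin 13 × Fin 13 × Fin 13 // goodTuple t = true} = 24 := by
  decide

abbrev Good : Type := {t : Fin 13 × Fin 13 × Fin 13 // goodTuple t = true}

lemma auto_adjB (f : G13 ≃g G13) : ∀ u v, adjB (f u) (f v) = adjB u v := by
  intro u v
  have h := f.map_rel_iff (a := u) (b := v)
  rw [adj_iff, adj_iff] at h
  cases hb : adjB (f u) (f v) <;> cases hb2 : adjB u v <;> simp_all

lemma ext_iso (f : G13 ≃g G13) :
    extT (f 0, f 1, f 9) = some ((ord0 ++ ord1).map fun u => (u, f u)) :=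
  ext_of_auto f f.toEquiv.surjective (auto_adjB f)

def Phi (f : G13 ≃g G13) : Good :=
  ⟨(f 0, f 1, f 9), by
    unfold goodTuple
    rw [ext_iso f]
    show isAuto (mFun _) = true
    rw [mFun_map]
    exact (isAuto_iff _).2 (auto_adjB f)⟩

lemma Phi_inj : Function.Injective Phi := by
  intro f g hfg
  have ht : ((f 0 : Fin 13), f 1, f 9) = (g 0, g 1, g 9) := congrArg Subtype.val hfg
  have h1 := ext_iso f
  rw [ht, ext_iso g] at h1
  have h3 := Option.some.inj h1
  have h4 : ⇑g = ⇑f := by rw [← mFun_map ⇑g, ← mFun_map ⇑f, h3]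
  exact DFunLike.coe_injective h4.symm

lemma mFun_cons_hit (a b : Fin 13) (m : List (Fin 13 × Fin 13)) :
    mFun ((a, b) :: m) a = b := by simp [mFun]

lemma mFun_cons_miss (a b c : Fin 13) (m : List (Fin 13 × Fin 13)) (h : a ≠ c) :
    mFun ((a, b) :: m) c = mFun m c := by
  have hb : (a == c) = false := by simpa using h
  simp [mFun, List.find?, hb]

lemma Phi_surj : Function.Surjective Phi := by
  rintro ⟨⟨t1, t2, t3⟩, ht⟩
  unfold goodTuple at ht
  split at ht
  · next m hm =>
    have hadj : ∀ u v, adjB (mFun m u) (mFun m v) = adjB u v := (isAuto_iff _).1 ht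
    have hginj : Function.Injective (mFun m) := fun u v huv =>
      rows_inj u v fun s => by rw [← hadj u s, huv, hadj v s]
    have hbij : Function.Bijective (mFun m) := Finite.injective_iff_bijective.1 hginj
    refine ⟨⟨Equiv.ofBijective _ hbij, ?_⟩, ?_⟩
    · intro u v
      rw [adj_iff, adj_iff]
      show adjB (mFun m u) (mFun m v) = true ↔ _
      rw [hadj]
    · apply Subtype.ext
      show (mFun m 0, mFun m 1, mFun m 9) = (t1, t2, t3)
      obtain ⟨r, rfl⟩ := extAux_prefix ord1 _ m hm
      show (mFun ((0, t1) :: (1, t2) :: (9, t3) :: r) 0,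
            mFun ((0, t1) :: (1, t2) :: (9, t3) :: r) 1,
            mFun ((0, t1) :: (1, t2) :: (9, t3) :: r) 9) = (t1, t2, t3)
      rw [mFun_cons_hit, mFun_cons_miss _ _ _ _ (by decide),
        mFun_cons_hit, mFun_cons_miss _ _ _ _ (by decide),
        mFun_cons_miss _ _ _ _ (by decide), mFun_cons_hit]
  · exact absurd ht (by simp)

theorem G13_automorphism_group_order :
    Nat.card (G13 ≃g G13) = 24 := by
  rw [Nat.card_eq_of_bijective Phi ⟨Phi_inj, Phi_surj⟩, Nat.card_eq_fintype_card, card24]
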